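/- The product measure Pois(q₀) ⊗ Pois(k₂ q₀ / k₁) on ℕ² is stationary for the generator A f(q,p) = r q₀ [f(q+1,p)−f(q,p)] + r q [f(q−1,p)−f(q,p)] + k₂ q [f(q−1,p+1)−f(q,p)] + k₁ p [f(q+1,p−1)−f(q,p)]; i.e., for every bounded f: ℕ² → ℝ, the double sum Σ_{q,p} A f(q,p) · e^{−(λ_Q+λ_P)} λ_Q^q λ_P^p /(q! p!) equals 0, where λ_Q = q₀ and λ_P = k₂ q₀/k₁. -/

import Mathlib

open Real

private lemma summable_succ_mul_pow_div_factorial (x : ℝ) :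
    Summable fun n : ℕ => ((n : ℝ) + 1) * x ^ n / n.factorial := by
  have hg : Summable fun n : ℕ => (n : ℝ) * x ^ n / n.factorial := by
    rw [← summable_nat_add_iff 1]
    have he : (fun n : ℕ => (((n + 1 : ℕ) : ℝ)) * x ^ (n + 1) / (n + 1).factorial)
        = fun n : ℕ => x * (x ^ n / n.factorial) := by
      funext n
      have hn : ((n.factorial : ℝ)) ≠ 0 := Nat.cast_ne_zero.mpr n.factorial_ne_zero
      rw [Nat.factorial_succ]
      push_cast
      field_simp
      ring
    rw [he]
    exact (Real.summable_pow_div_factorial x).mul_left x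
  have hu := Real.summable_pow_div_factorial x
  have h := hg.add hu
  convert h using 2 with n
  ring

/-- The product measure `Pois(q₀) ⊗ Pois(k₂ q₀/k₁)` on `ℕ²` is stationary
for the one-compartment generator
`A f(q,p) = r q₀ [f(q+1,p)−f(q,p)] + r q [f(q−1,p)−f(q,p)]
          + k₂ q [f(q−1,p+1)−f(q,p)] + k₁ p [f(q+1,p−1)−f(q,p)]`:
for every bounded `f : ℕ² → ℝ`,
`Σ_{q,p} A f(q,p) · e^{−(λ_Q+λ_P)} λ_Q^q λ_P^p/(q! p!) = 0`, where `λ_Q = q₀` and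
`λ_P = k₂ q₀/k₁`.  (Natural subtraction `q−1` at `q = 0` is harmless since that term
carries the factor `q = 0`.) -/
theorem product_poisson_stationary
    (r q₀ k₁ k₂ : ℝ) (hr : 0 < r) (hq₀ : 0 < q₀) (hk₁ : 0 < k₁) (hk₂ : 0 < k₂)
    (f : ℕ → ℕ → ℝ) (hf : ∃ C, ∀ q p, |f q p| ≤ C) :
    ∑' qp : ℕ × ℕ,
        (r * q₀ * (f (qp.1 + 1) qp.2 - f qp.1 qp.2)
          + r * qp.1 * (f (qp.1 - 1) qp.2 - f qp.1 qp.2)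
          + k₂ * qp.1 * (f (qp.1 - 1) (qp.2 + 1) - f qp.1 qp.2)
          + k₁ * qp.2 * (f (qp.1 + 1) (qp.2 - 1) - f qp.1 qp.2))
        * (exp (-(q₀ + k₂ * q₀ / k₁)) * q₀ ^ qp.1 * (k₂ * q₀ / k₁) ^ qp.2
            / (Nat.factorial qp.1 * Nat.factorial qp.2))
      = 0 := by
  obtain ⟨C, hC⟩ := hf
  have hC0 : 0 ≤ C := (abs_nonneg _).trans (hC 0 0)
  set Λ : ℝ := k₂ * q₀ / k₁ with hΛ
  have hΛpos : 0 < Λ := by rw [hΛ]; positivity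
  set w : ℕ → ℕ → ℝ := fun q p =>
    exp (-(q₀ + Λ)) * q₀ ^ q * Λ ^ p / (Nat.factorial q * Nat.factorial p) with hw
  have hfacq : ∀ q : ℕ, ((Nat.factorial q : ℝ)) ≠ 0 :=
    fun q => Nat.cast_ne_zero.mpr q.factorial_ne_zero
  have hwpos : ∀ q p : ℕ, 0 < w q p := by
    intro q p
    have h1 : (0:ℝ) < Nat.factorial q := by exact_mod_cast q.factorial_pos
    have h2 : (0:ℝ) < Nat.factorial p := by exact_mod_cast p.factorial_pos
    simp only [hw]
    positivity
  have hshiftq : ∀ q p : ℕ, ((q:ℝ)+1) * w (q+1) p = q₀ * w q p := by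
    intro q p
    simp only [hw]
    rw [Nat.factorial_succ, pow_succ]
    have h1 := hfacq q
    have h2 := hfacq p
    push_cast
    field_simp
  have hshiftp : ∀ q p : ℕ, ((p:ℝ)+1) * w q (p+1) = Λ * w q p := by
    intro q p
    simp only [hw]
    rw [Nat.factorial_succ, pow_succ]
    have h1 := hfacq q
    have h2 := hfacq p
    push_cast
    field_simp
  have hbal : k₁ * Λ = k₂ * q₀ := by
    rw [hΛ]; field_simp
  -- the four pieces of the generator, multiplied by the weight
  set T1 : ℕ × ℕ → ℝ := fun x => r * q₀ * (f (x.1+1) x.2 - f x.1 x.2) * w x.1 x.2 with hT1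
  set T2 : ℕ × ℕ → ℝ := fun x => r * x.1 * (f (x.1-1) x.2 - f x.1 x.2) * w x.1 x.2 with hT2
  set T3 : ℕ × ℕ → ℝ := fun x => k₂ * x.1 * (f (x.1-1) (x.2+1) - f x.1 x.2) * w x.1 x.2 with hT3
  set T4 : ℕ × ℕ → ℝ := fun x => k₁ * x.2 * (f (x.1+1) (x.2-1) - f x.1 x.2) * w x.1 x.2 with hT4
  set c : ℕ × ℕ → ℝ := fun x => k₂ * q₀ * (f x.1 (x.2+1) - f (x.1+1) x.2) * w x.1 x.2 with hc
  have habs2 : ∀ a b a' b' : ℕ, |f a b - f a' b'| ≤ 2 * C := by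
    intro a b a' b'
    have h1 := hC a b
    have h2 := hC a' b'
    calc |f a b - f a' b'| ≤ |f a b| + |f a' b'| := abs_sub _ _
      _ ≤ 2 * C := by linarith
  have hone : ∀ q p : ℕ, (1:ℝ) ≤ ((q:ℝ)+1) * ((p:ℝ)+1) := by
    intro q p
    have h1 : (0:ℝ) ≤ q := Nat.cast_nonneg q
    have h2 : (0:ℝ) ≤ p := Nat.cast_nonneg p
    nlinarith
  have bound : ∀ (a d : ℝ) (q p : ℕ), 0 ≤ a → |d| ≤ 2*C → |a * d * w q p| ≤ a * (2*C) * w q p := by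
    intro a d q p ha hd
    have hW := (hwpos q p).le
    rw [abs_mul, abs_mul, abs_of_nonneg ha, abs_of_nonneg hW]
    gcongr
  have step0 : ∀ (s : ℝ) (q p : ℕ), 0 ≤ s →
      s * (2*C) * w q p ≤ (2*C*s) * (((q:ℝ)+1) * (((p:ℝ)+1) * w q p)) := by
    intro s q p hs
    have hX : (0:ℝ) ≤ 2*C*s*w q p :=
      mul_nonneg (mul_nonneg (by linarith) hs) (hwpos q p).le
    nlinarith [mul_le_mul_of_nonneg_left (hone q p) hX]
  have stepq : ∀ (s : ℝ) (q p : ℕ), 0 ≤ s →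
      (s * (q:ℝ)) * (2*C) * w q p ≤ (2*C*s) * (((q:ℝ)+1) * (((p:ℝ)+1) * w q p)) := by
    intro s q p hs
    have h1 : (0:ℝ) ≤ q := Nat.cast_nonneg q
    have h2 : (0:ℝ) ≤ p := Nat.cast_nonneg p
    have hq : (q:ℝ) ≤ ((q:ℝ)+1) * ((p:ℝ)+1) := by nlinarith
    have hX : (0:ℝ) ≤ 2*C*s*w q p :=
      mul_nonneg (mul_nonneg (by linarith) hs) (hwpos q p).le
    nlinarith [mul_le_mul_of_nonneg_left hq hX]
  have stepp : ∀ (s : ℝ) (q p : ℕ), 0 ≤ s →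
      (s * (p:ℝ)) * (2*C) * w q p ≤ (2*C*s) * (((q:ℝ)+1) * (((p:ℝ)+1) * w q p)) := by
    intro s q p hs
    have h1 : (0:ℝ) ≤ q := Nat.cast_nonneg q
    have h2 : (0:ℝ) ≤ p := Nat.cast_nonneg p
    have hq : (p:ℝ) ≤ ((q:ℝ)+1) * ((p:ℝ)+1) := by nlinarith
    have hX : (0:ℝ) ≤ 2*C*s*w q p :=
      mul_nonneg (mul_nonneg (by linarith) hs) (hwpos q p).le
    nlinarith [mul_le_mul_of_nonneg_left hq hX]
  -- master summability criterion
  have master : ∀ (K : ℝ) (g : ℕ × ℕ → ℝ),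
      (∀ q p : ℕ, |g (q, p)| ≤ K * (((q:ℝ)+1) * (((p:ℝ)+1) * w q p))) → Summable g := by
    intro K g hg
    have hU := summable_succ_mul_pow_div_factorial q₀
    have hV := summable_succ_mul_pow_div_factorial Λ
    have hUV : Summable fun x : ℕ × ℕ =>
        (((x.1:ℝ)+1) * q₀ ^ x.1 / Nat.factorial x.1)
          * (((x.2:ℝ)+1) * Λ ^ x.2 / Nat.factorial x.2) := by
      apply hU.mul_of_nonneg hV
      · intro q
        have := hfacq q
        positivity
      · intro p
        have := hfacq p
        positivity
    apply Summable.of_norm_bounded (hUV.mul_left (K * exp (-(q₀ + Λ))))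
    rintro ⟨q, p⟩
    calc ‖g (q, p)‖ = |g (q, p)| := rfl
      _ ≤ K * (((q:ℝ)+1) * (((p:ℝ)+1) * w q p)) := hg q p
      _ = K * exp (-(q₀+Λ)) *
          ((((q:ℝ)+1) * q₀ ^ q / Nat.factorial q) * (((p:ℝ)+1) * Λ ^ p / Nat.factorial p)) := by
        simp only [hw]
        have h1 := hfacq q
        have h2 := hfacq p
        field_simp
  have hS1 : Summable T1 := by
    apply master (2*C*(r*q₀))
    intro q p
    simp only [hT1]
    exact (bound (r*q₀) _ q p (by positivity) (habs2 _ _ _ _)).trans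
      (step0 (r*q₀) q p (by positivity))
  have hS2 : Summable T2 := by
    apply master (2*C*r)
    intro q p
    simp only [hT2]
    exact (bound (r*(q:ℝ)) _ q p (by positivity) (habs2 _ _ _ _)).trans
      (stepq r q p hr.le)
  have hS3 : Summable T3 := by
    apply master (2*C*k₂)
    intro q p
    simp only [hT3]
    exact (bound (k₂*(q:ℝ)) _ q p (by positivity) (habs2 _ _ _ _)).trans
      (stepq k₂ q p hk₂.le)
  have hS4 : Summable T4 := by
    apply master (2*C*k₁)
    intro q p
    simp only [hT4]
    exact (bound (k₁*(p:ℝ)) _ q p (by positivity) (habs2 _ _ _ _)).trans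
      (stepp k₁ q p hk₁.le)
  have hSc : Summable c := by
    apply master (2*C*(k₂*q₀))
    intro q p
    simp only [hc]
    exact (bound (k₂*q₀) _ q p (by positivity) (habs2 _ _ _ _)).trans
      (step0 (k₂*q₀) q p (by positivity))
  -- swapped summabilities
  have hS1s : Summable (T1 ∘ (Equiv.prodComm ℕ ℕ)) := (Equiv.prodComm ℕ ℕ).summable_iff.mpr hS1
  have hS2s : Summable (T2 ∘ (Equiv.prodComm ℕ ℕ)) := (Equiv.prodComm ℕ ℕ).summable_iff.mpr hS2
  have hS3s : Summable (T3 ∘ (Equiv.prodComm ℕ ℕ)) := (Equiv.prodComm ℕ ℕ).summable_iff.mpr hS3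
  have hScs : Summable (c ∘ (Equiv.prodComm ℕ ℕ)) := (Equiv.prodComm ℕ ℕ).summable_iff.mpr hSc
  -- tsum over the product written as iterated sum, p outside
  have swap_eq : ∀ (g : ℕ × ℕ → ℝ), Summable (g ∘ (Equiv.prodComm ℕ ℕ)) →
      ∑' x : ℕ × ℕ, g x = ∑' p : ℕ, ∑' q : ℕ, g (q, p) := by
    intro g hg
    rw [← (Equiv.prodComm ℕ ℕ).tsum_eq g]
    exact Summable.tsum_prod' hg fun b => hg.prod_factor b
  -- pointwise shift identities
  have hI2 : ∀ q p : ℕ, T2 (q+1, p) = - T1 (q, p) := by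
    intro q p
    simp only [hT2, hT1, Nat.add_sub_cancel]
    push_cast
    linear_combination r * (f q p - f (q+1) p) * hshiftq q p
  have hI3 : ∀ q p : ℕ, T3 (q+1, p) = c (q, p) := by
    intro q p
    simp only [hT3, hc, Nat.add_sub_cancel]
    push_cast
    linear_combination k₂ * (f q (p+1) - f (q+1) p) * hshiftq q p
  have hI4 : ∀ q p : ℕ, T4 (q, p+1) = - c (q, p) := by
    intro q p
    simp only [hT4, hc, Nat.add_sub_cancel]
    push_cast
    linear_combination k₁ * (f (q+1) p - f q (p+1)) * hshiftp q p
      + (f (q+1) p - f q (p+1)) * w q p * hbal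
  have hz2 : ∀ p : ℕ, T2 (0, p) = 0 := by intro p; simp [hT2]
  have hz3 : ∀ p : ℕ, T3 (0, p) = 0 := by intro p; simp [hT3]
  have hz4 : ∀ q : ℕ, T4 (q, 0) = 0 := by intro q; simp [hT4]
  -- ∑ T2 = -∑ T1
  have hA : ∑' x : ℕ × ℕ, T2 x = - ∑' x : ℕ × ℕ, T1 x := by
    rw [swap_eq T2 hS2s, swap_eq T1 hS1s]
    rw [← tsum_neg]
    apply tsum_congr
    intro p
    have hsp : Summable fun q : ℕ => T2 (q, p) := hS2s.prod_factor p
    rw [Summable.tsum_eq_zero_add hsp, hz2 p, zero_add, ← tsum_neg]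
    exact tsum_congr fun q => hI2 q p
  -- ∑ T3 = ∑∑ c  (p outside)
  have hB : ∑' x : ℕ × ℕ, T3 x = ∑' p : ℕ, ∑' q : ℕ, c (q, p) := by
    rw [swap_eq T3 hS3s]
    apply tsum_congr
    intro p
    have hsp : Summable fun q : ℕ => T3 (q, p) := hS3s.prod_factor p
    rw [Summable.tsum_eq_zero_add hsp, hz3 p, zero_add]
    exact tsum_congr fun q => hI3 q p
  -- ∑ T4 = -∑∑ c  (q outside)
  have hB' : ∑' x : ℕ × ℕ, T4 x = - ∑' q : ℕ, ∑' p : ℕ, c (q, p) := by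
    rw [Summable.tsum_prod' hS4 (fun b => hS4.prod_factor b)]
    rw [← tsum_neg]
    apply tsum_congr
    intro q
    have hsq : Summable fun p : ℕ => T4 (q, p) := hS4.prod_factor q
    rw [Summable.tsum_eq_zero_add hsq, hz4 q, zero_add, ← tsum_neg]
    exact tsum_congr fun p => hI4 q p
  have hcomm : ∑' p : ℕ, ∑' q : ℕ, c (q, p) = ∑' q : ℕ, ∑' p : ℕ, c (q, p) := by
    exact Summable.tsum_comm' hSc (fun b => hSc.prod_factor b) (fun cc => hScs.prod_factor cc)
  -- assemble
  have hpt : ∀ x : ℕ × ℕ,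
      (r * q₀ * (f (x.1 + 1) x.2 - f x.1 x.2)
          + r * x.1 * (f (x.1 - 1) x.2 - f x.1 x.2)
          + k₂ * x.1 * (f (x.1 - 1) (x.2 + 1) - f x.1 x.2)
          + k₁ * x.2 * (f (x.1 + 1) (x.2 - 1) - f x.1 x.2))
        * (exp (-(q₀ + Λ)) * q₀ ^ x.1 * Λ ^ x.2
            / (Nat.factorial x.1 * Nat.factorial x.2))
      = T1 x + T2 x + T3 x + T4 x := by
    intro x
    simp only [hT1, hT2, hT3, hT4, hw]
    ring
  rw [tsum_congr hpt]
  rw [Summable.tsum_add ((hS1.add hS2).add hS3) hS4, Summable.tsum_add (hS1.add hS2) hS3, Summable.tsum_add hS1 hS2]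
  rw [hA, hB, hB', hcomm]
  ring
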